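/- arXiv:1611.00824 — 3 statements merged into one kernel-verified Lean document; each statement's English description precedes it below -/
import Mathlib

section
/- Let A be a finite local ring (not necessarily commutative) with Jacobson radical r and residue field of odd characteristic, equipped with an involution * such that a − a* ∈ r for all a ∈ A, and let m ≥ 1. For every proper *-invariant two-sided ideal I of A, the kernel of the reduction homomorphism U_{2m}(A) → U_{2m}(A/I), namely the set of matrices X ∈ M_{2m}(A) with XᴴJ₀X = J₀ and all entries of X − 1 lying in I, has cardinality |I|^{2m²−m} · |I ∩ 𝔪|^{2m}, where 𝔪 = {a ∈ r : a* = a}. -/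
set_option linter.unusedSectionVars false
set_option maxHeartbeats 1000000

open Matrix

/-- The standard symplectic matrix `J₀ ∈ M_{2m}(A)`: the 2×2 block matrix
`[[0, I_m], [-I_m, 0]]` with `m × m` blocks. -/
def stdSymplectic (A : Type*) [Ring A] (m : ℕ) : Matrix (Fin (2 * m)) (Fin (2 * m)) A :=
  Matrix.of fun i j =>
    if (i : ℕ) + m = (j : ℕ) then (1 : A)
    else if (j : ℕ) + m = (i : ℕ) then (-1 : A) else 0

section
variable {A : Type*} [Ring A] [IsLocalRing A] [Finite A]

theorem finIsUnit_left {M : Type*} [Monoid M] [Finite M] {a b : M} (h : a * b = 1) :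
    IsUnit a := by
  have hsurj : Function.Surjective (fun x : M => a * x) := fun y =>
    ⟨b * y, by show a * (b * y) = y; rw [← mul_assoc, h, one_mul]⟩
  have hinj := Finite.injective_iff_surjective.mpr hsurj
  have h2 : a * (b * a) = a * 1 := by rw [← mul_assoc, h, one_mul, mul_one]
  exact ⟨⟨a, b, h, hinj h2⟩, rfl⟩

theorem finIsUnit_right {M : Type*} [Monoid M] [Finite M] {a b : M} (h : a * b = 1) :
    IsUnit b := by
  have hsurj : Function.Surjective (fun x : M => x * b) := fun y =>
    ⟨y * a, by show y * a * b = y; rw [mul_assoc, h, mul_one]⟩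
  have hinj := Finite.injective_iff_surjective.mpr hsurj
  have h2 : (b * a) * b = 1 * b := by rw [mul_assoc, h, mul_one, one_mul]
  exact ⟨⟨b, a, hinj h2, h⟩, rfl⟩

theorem nu_mul_left (b : A) {a : A} (ha : a ∈ nonunits A) : b * a ∈ nonunits A := by
  intro h
  obtain ⟨u, hu⟩ := h
  have h1 : (↑u⁻¹ * b) * a = 1 := by rw [mul_assoc, ← hu]; exact u.inv_mul
  exact ha (finIsUnit_right h1)

theorem nu_mul_right (b : A) {a : A} (ha : a ∈ nonunits A) : a * b ∈ nonunits A := by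
  intro h
  obtain ⟨u, hu⟩ := h
  have h1 : a * (b * ↑u⁻¹) = 1 := by rw [← mul_assoc, ← hu]; exact u.mul_inv
  exact ha (finIsUnit_left h1)

theorem nu_add {a b : A} (ha : a ∈ nonunits A) (hb : b ∈ nonunits A) : a + b ∈ nonunits A := by
  intro h
  obtain ⟨u, hu⟩ := h
  have h1 : a * ↑u⁻¹ + b * ↑u⁻¹ = 1 := by rw [← add_mul, ← hu]; exact u.mul_inv
  rcases IsLocalRing.isUnit_or_isUnit_of_add_one h1 with h' | h'
  · exact nu_mul_right (↑u⁻¹ : A) ha h'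
  · exact nu_mul_right (↑u⁻¹ : A) hb h'

theorem nu_one_sub {a : A} (ha : a ∈ nonunits A) : IsUnit (1 - a) := by
  rcases IsLocalRing.isUnit_or_isUnit_of_add_one (sub_add_cancel 1 a) with h | h
  · exact h
  · exact absurd h ha

theorem nu_nilpotent {a : A} (ha : a ∈ nonunits A) : IsNilpotent a := by
  obtain ⟨i, j, hij, hpow⟩ := Finite.exists_ne_map_eq_of_infinite (fun n : ℕ => a ^ n)
  wlog hlt : i < j generalizing i j
  · exact this j i hij.symm hpow.symm (by omega)
  have hd : a ^ (j - i) ∈ nonunits A := by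
    have : a ^ (j - i) = a * a ^ (j - i - 1) := by
      rw [← pow_succ']; congr 1; omega
    rw [this]; exact nu_mul_right _ ha
  have hu := nu_one_sub hd
  have h0 : a ^ i * (1 - a ^ (j - i)) = 0 := by
    rw [mul_sub, mul_one, ← pow_add]
    simp [Nat.add_sub_cancel' hlt.le, hpow]
  obtain ⟨u, huu⟩ := hu
  refine ⟨i, ?_⟩
  calc a ^ i = a ^ i * (1 - a ^ (j-i)) * ↑u⁻¹ := by
        rw [mul_assoc, ← huu, u.mul_inv, mul_one]
    _ = 0 := by rw [h0, zero_mul]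
end

section
variable {A : Type*} [Ring A] [IsLocalRing A] [Finite A]

theorem prod_nonunits_eq_zero (L : List A) (hL : ∀ a ∈ L, a ∈ nonunits A)
    (hlen : Nat.card A ≤ L.length) : L.prod = 0 := by
  classical
  set N := Nat.card A with hN
  set p : ℕ → A := fun i => (L.take i).prod with hp
  set U : ℕ → Set A := fun i => Set.range (fun x => p i * x) with hU
  have hpsucc : ∀ i (h : i < L.length), p (i + 1) = p i * L.get ⟨i, h⟩ := by
    intro i h
    simp only [hp]
    rw [List.prod_take_succ _ _ h]; rfl
  have hsub : ∀ i, i < L.length → U (i + 1) ⊆ U i := by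
    rintro i h _ ⟨x, rfl⟩
    exact ⟨L.get ⟨i, h⟩ * x, by show p i * _ = p (i+1) * x; rw [← mul_assoc, ← hpsucc i h]⟩
  have hfin : ∀ i, (U i).Finite := fun i => Set.toFinite _
  have hne : ∀ i, (U i).Nonempty := fun i => ⟨p i, 1, mul_one _⟩
  have hcard_le : ∀ i, (U i).ncard ≤ N := by
    intro i
    rw [hN, ← Set.ncard_univ]
    exact Set.ncard_le_ncard (Set.subset_univ _) (Set.toFinite _)
  -- find i < N with equality of cards
  have hex : ∃ i < N, (U i).ncard ≤ (U (i + 1)).ncard := by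
    by_contra hcon
    push_neg at hcon
    have key : ∀ i, i ≤ N → (U i).ncard + i ≤ (U 0).ncard := by
      intro i
      induction i with
      | zero => simp
      | succ k ih =>
        intro hk
        have h1 := hcon k (by omega)
        have h2 := ih (by omega)
        omega
    have h1 := key N le_rfl
    have h2 := Set.ncard_pos (hfin N) |>.mpr (hne N)
    have h3 := hcard_le 0
    omega
  obtain ⟨i, hiN, hcard⟩ := hex
  have hilen : i < L.length := lt_of_lt_of_le hiN hlen
  have hUeq : U (i + 1) = U i :=
    Set.eq_of_subset_of_ncard_le (hsub i hilen) hcard (hfin i)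
  have hpiU : p i ∈ U (i + 1) := by
    rw [hUeq]; exact ⟨1, mul_one _⟩
  obtain ⟨x, hx⟩ := hpiU
  have hx' : p i * (L.get ⟨i, hilen⟩ * x) = p i := by
    rw [← mul_assoc, ← hpsucc i hilen]; exact hx
  have hzero : p i * (1 - L.get ⟨i, hilen⟩ * x) = 0 := by
    rw [mul_sub, mul_one, hx', sub_self]
  have hu : IsUnit (1 - L.get ⟨i, hilen⟩ * x) :=
    nu_one_sub (nu_mul_right x (hL _ (L.get_mem _)))
  obtain ⟨u, huu⟩ := hu
  have hpi0 : p i = 0 := by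
    calc p i = p i * (1 - L.get ⟨i, hilen⟩ * x) * ↑u⁻¹ := by
          rw [mul_assoc, ← huu, u.mul_inv, mul_one]
      _ = 0 := by rw [hzero, zero_mul]
  calc L.prod = (L.take i).prod * (L.drop i).prod := (List.prod_take_mul_prod_drop _ _).symm
    _ = 0 := by
        have : (List.take i L).prod = p i := rfl
        rw [this, hpi0, zero_mul]
end

section
variable {A : Type*} [Ring A] [IsLocalRing A] [Finite A]

/-- closure of k-fold products of nonunits -/
def nuProd (A : Type*) [Ring A] (k : ℕ) : AddSubmonoid A :=
  AddSubmonoid.closure {x : A | ∃ L : List A, L.length = k ∧ (∀ a ∈ L, a ∈ nonunits A) ∧ L.prod = x}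

theorem nuProd_mul {k : ℕ} {x a : A} (hx : x ∈ nuProd A k) (ha : a ∈ nonunits A) :
    x * a ∈ nuProd A (k + 1) := by
  induction hx using AddSubmonoid.closure_induction with
  | mem y hy =>
    obtain ⟨L, hlen, hmem, rfl⟩ := hy
    refine AddSubmonoid.subset_closure ⟨L ++ [a], ?_, ?_, ?_⟩
    · simp [hlen]
    · intro b hb; rcases List.mem_append.mp hb with h | h
      · exact hmem b h
      · simp at h; subst h; exact ha
    · simp
  | zero => rw [zero_mul]; exact zero_mem _
  | add y z _ _ hy hz => rw [add_mul]; exact add_mem hy hz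

theorem matrix_pow_mem {n : ℕ} (S : Matrix (Fin n) (Fin n) A)
    (hS : ∀ i j, S i j ∈ nonunits A) (k : ℕ) (i j : Fin n) :
    (S ^ (k + 1)) i j ∈ nuProd A (k + 1) := by
  induction k generalizing i j with
  | zero =>
    rw [pow_one]
    exact AddSubmonoid.subset_closure ⟨[S i j], by simp, by simpa using hS i j, by simp⟩
  | succ k ih =>
    rw [pow_succ, Matrix.mul_apply]
    exact AddSubmonoid.sum_mem _ fun l _ => nuProd_mul (ih i l) (hS l j)

theorem matrix_nonunits_nilpotent {n : ℕ} (S : Matrix (Fin n) (Fin n) A)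
    (hS : ∀ i j, S i j ∈ nonunits A) : IsNilpotent S := by
  refine ⟨Nat.card A + 1, ?_⟩
  ext i j
  have h := matrix_pow_mem S hS (Nat.card A) i j
  have hsub : nuProd A (Nat.card A + 1) ≤ ⊥ := by
    rw [nuProd]
    refine AddSubmonoid.closure_le.mpr ?_
    rintro x ⟨L, hlen, hmem, rfl⟩
    simp only [AddSubmonoid.coe_bot, Set.mem_singleton_iff, SetLike.mem_coe,
      AddSubmonoid.mem_bot]
    exact prod_nonunits_eq_zero L hmem (by omega)
  have := hsub h
  simpa using this

theorem isUnit_one_add_matrix {n : ℕ} (S : Matrix (Fin n) (Fin n) A)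
    (hS : ∀ i j, S i j ∈ nonunits A) : IsUnit (1 + S) :=
  (matrix_nonunits_nilpotent S hS).isUnit_one_add

theorem isUnit_one_sub_matrix {n : ℕ} (S : Matrix (Fin n) (Fin n) A)
    (hS : ∀ i j, S i j ∈ nonunits A) : IsUnit (1 - S) :=
  (matrix_nonunits_nilpotent S hS).isUnit_one_sub
end


section
variable {A : Type*} [Ring A] {m : ℕ}

theorem stdSymplectic_apply (i j : Fin (2 * m)) :
    stdSymplectic A m i j =
      if (i : ℕ) + m = (j : ℕ) then (1 : A)
      else if (j : ℕ) + m = (i : ℕ) then (-1 : A) else 0 := rfl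

/-- the unique column with nonzero entry in row i -/
def sigma (i : Fin (2 * m)) : Fin (2 * m) :=
  if h : (i : ℕ) < m then ⟨i + m, by omega⟩ else ⟨i - m, by have := i.isLt; omega⟩

theorem sigma_spec (i : Fin (2 * m)) :
    ((i : ℕ) < m ∧ ((sigma i : ℕ) = i + m)) ∨ (m ≤ (i : ℕ) ∧ ((sigma i : ℕ) + m = i)) := by
  unfold sigma
  split_ifs with h
  · left; exact ⟨h, rfl⟩
  · right; have := i.isLt; simp only [not_lt] at h; exact ⟨h, by simp; omega⟩

theorem stdSymplectic_eq_single (i j : Fin (2 * m)) :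
    stdSymplectic A m i j = if j = sigma i then (if (i : ℕ) < m then (1:A) else -1) else 0 := by
  rw [stdSymplectic_apply]
  rcases sigma_spec i with ⟨h1, h2⟩ | ⟨h1, h2⟩ <;>
    have hj := j.isLt <;> have hs := (sigma i).isLt <;>
    split_ifs with hc1 hc2 hc3 <;> first
      | rfl
      | (exfalso; revert hc1; try revert hc2; try revert hc3;
         simp [Fin.ext_iff] at * <;> omega)
      | (simp [Fin.ext_iff] at * <;> omega)
end
section
variable {A : Type*} [Ring A] {m : ℕ}

theorem sigma_sigma (i : Fin (2 * m)) : sigma (sigma i) = i := by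
  rcases sigma_spec i with ⟨h1, h2⟩ | ⟨h1, h2⟩ <;>
    rcases sigma_spec (sigma i) with ⟨g1, g2⟩ | ⟨g1, g2⟩ <;>
    (try exact absurd g1 (by omega)) <;> exact Fin.ext (by omega)

theorem stdSymplectic_mul_self :
    (stdSymplectic A m) * (stdSymplectic A m) = -1 := by
  ext i k
  rw [Matrix.mul_apply, Finset.sum_eq_single (sigma i)]
  · rw [stdSymplectic_eq_single i (sigma i), if_pos rfl,
      stdSymplectic_eq_single (sigma i) k, sigma_sigma]
    have hs := (sigma i).isLt
    rcases sigma_spec i with ⟨h1, h2⟩ | ⟨h1, h2⟩ <;>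
      [ rw [if_pos h1, if_neg (show ¬ ((sigma i : ℕ) < m) by omega)];
        rw [if_neg (show ¬ ((i : ℕ) < m) by omega), if_pos (show (sigma i : ℕ) < m by omega)] ] <;>
      by_cases hk : k = i <;>
      simp only [hk, if_pos, if_neg, Matrix.neg_apply, Matrix.one_apply_eq, if_true] <;>
      first
        | (subst hk; simp)
        | (rw [if_false, mul_zero]; simp [Matrix.neg_apply, Matrix.one_apply, Ne.symm hk])
  · intro j _ hj
    rw [stdSymplectic_eq_single i j, if_neg hj, zero_mul]
  · intro h; exact absurd (Finset.mem_univ _) h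
end
section
variable {A : Type*} [Ring A] [StarRing A] {m : ℕ}
theorem stdSymplectic_conjTranspose :
    star (stdSymplectic A m) = -(stdSymplectic A m) := by
  ext i j
  rw [Matrix.star_apply, stdSymplectic_apply, Matrix.neg_apply, stdSymplectic_apply]
  have hi := i.isLt
  by_cases h1 : (j : ℕ) + m = (i : ℕ) <;> by_cases h2 : (i : ℕ) + m = (j : ℕ) <;>
    simp [h1, h2] <;> omega
end

noncomputable section
variable {R : Type*} [Ring R]

/-- Cayley transform -/
def cay (Y : R) : R := (1 - Y) * Ring.inverse (1 + Y)

theorem cay_def (Y : R) : cay Y = (1 - Y) * Ring.inverse (1 + Y) := rfl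

theorem two_commute (x : R) : Commute (2:R) x := by
  show (2:R) * x = x * 2
  rw [two_mul, mul_two]

theorem cay_one_add {Y : R} (hY : IsUnit (1 + Y)) :
    1 + cay Y = 2 * Ring.inverse (1 + Y) := by
  rw [cay]
  nth_rewrite 1 [← Ring.mul_inverse_cancel _ hY]
  rw [← add_mul]
  congr 1
  noncomm_ring
  simp [two_smul, one_add_one_eq_two]

theorem cay_one_sub {Y : R} (hY : IsUnit (1 + Y)) :
    1 - cay Y = 2 * (Y * Ring.inverse (1 + Y)) := by
  rw [cay]
  nth_rewrite 1 [← Ring.mul_inverse_cancel _ hY]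
  rw [← sub_mul, ← mul_assoc]
  congr 1
  noncomm_ring

theorem cay_isUnit_one_add {Y : R} (h2R : IsUnit (2:R)) (hY : IsUnit (1 + Y)) :
    IsUnit (1 + cay Y) := by
  rw [cay_one_add hY]
  exact h2R.mul (isUnit_ringInverse.mpr hY)

theorem cay_cay {Y : R} (h2R : IsUnit (2:R)) (hY : IsUnit (1 + Y)) :
    cay (cay Y) = Y := by
  have hV : IsUnit (Ring.inverse (1 + Y)) := isUnit_ringInverse.mpr hY
  have hinv2 : Ring.inverse (2 * Ring.inverse (1 + Y)) =
      (1 + Y) * Ring.inverse (2:R) := by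
    rw [Ring.mul_inverse_rev' (two_commute _)]
    congr 1
    conv_lhs => rw [← hY.unit_spec, Ring.inverse_unit, Ring.inverse_unit, inv_inv]
    rw [hY.unit_spec]
  rw [cay, cay_one_sub hY, cay_one_add hY, hinv2]
  calc 2 * (Y * Ring.inverse (1 + Y)) * ((1 + Y) * Ring.inverse 2)
      = 2 * (Y * (Ring.inverse (1 + Y) * (1 + Y))) * Ring.inverse 2 := by
        simp only [mul_assoc]
    _ = 2 * Y * Ring.inverse 2 := by rw [Ring.inverse_mul_cancel _ hY, mul_one, mul_assoc]
    _ = Y * (2 * Ring.inverse 2) := by rw [(two_commute Y).eq, mul_assoc]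
    _ = Y := by rw [Ring.mul_inverse_cancel _ h2R, mul_one]
end
noncomputable section
variable {R : Type*} [Ring R] [StarRing R]

theorem herm_iff {J X : R} (hJs : star J = -J) (h2R : IsUnit (2:R)) (hU : IsUnit (1 + X)) :
    star (J * ((1 - X) * Ring.inverse (1 + X))) = J * ((1 - X) * Ring.inverse (1 + X)) ↔
      star X * J * X = J := by
  set U := 1 + X with hUdef
  set V := Ring.inverse U with hVdef
  set X' := star X with hX'def
  set U' := 1 + X' with hU'def
  set V' := Ring.inverse U' with hV'def
  have hU' : IsUnit U' := by
    have := hU.star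
    rwa [hUdef, star_add, star_one] at this
  have hV'U' : V' * U' = 1 := Ring.inverse_mul_cancel _ hU'
  have hUV : U * V = 1 := Ring.mul_inverse_cancel _ hU
  set P := (1 - X') * -J * U with hPdef
  set Q := U' * (J * (1 - X)) with hQdef
  have id1 : Q - P = 2 * (J - X' * J * X) := by
    rw [hPdef, hQdef, hUdef, hU'def]
    noncomm_ring
  have hstarV : star V = V' := by
    rw [hVdef, ← Ring.inverse_star]
    congr 1
    rw [hUdef, star_add, star_one]
  have hTT : V' * Q * V = J * ((1 - X) * V) := by
    rw [hQdef]
    simp only [← mul_assoc]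
    rw [hV'U', one_mul]
  have hsT : star (J * ((1 - X) * V)) = V' * P * V := by
    rw [StarMul.star_mul, StarMul.star_mul, star_sub, star_one, hJs, hstarV, hPdef]
    simp only [← mul_assoc]
    rw [mul_assoc _ U V, hUV, mul_one]
  have hVu : IsUnit V := isUnit_ringInverse.mpr hU
  have hV'u : IsUnit V' := isUnit_ringInverse.mpr hU'
  constructor
  · intro h
    rw [hsT, ← hTT] at h
    have h1 : P = Q := hV'u.mul_left_cancel (hVu.mul_right_cancel h)
    have h4 : (2:R) * (J - X' * J * X) = 2 * 0 := by
      rw [← id1, h1, sub_self, mul_zero]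
    have h5 := h2R.mul_left_cancel h4
    rw [sub_eq_zero] at h5
    exact h5.symm
  · intro h
    rw [hsT, ← hTT]
    have h1 : Q - P = 0 := by rw [id1, ← hX'def] at *; rw [h]; simp
    have h2 : P = Q := by rw [← sub_eq_zero]; rw [← neg_sub Q P, h1, neg_zero]
    rw [h2]
end

section
variable {A : Type*} [Ring A] [StarRing A] {n : ℕ} (I : TwoSidedIdeal A)

/-- Hermitian matrices with entries in I are determined by strict upper entries and diagonal. -/
noncomputable def hermEquiv (hIstar : ∀ a ∈ I, star a ∈ I) :
    {T : Matrix (Fin n) (Fin n) A // Tᴴ = T ∧ ∀ i j, T i j ∈ I} ≃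
      ({p : Fin n × Fin n // p.1 < p.2} → I) × (Fin n → {a : A // a ∈ I ∧ star a = a}) where
  toFun T :=
    ⟨fun p => ⟨T.1 p.1.1 p.1.2, T.2.2 _ _⟩,
     fun i => ⟨T.1 i i, T.2.2 i i, by
      conv_lhs => rw [← T.2.1]
      rw [Matrix.conjTranspose_apply, star_star]⟩⟩
  invFun fg :=
    ⟨Matrix.of fun i j =>
      if h : i < j then (fg.1 ⟨(i, j), h⟩ : A)
      else if h' : j < i then star (fg.1 ⟨(j, i), h'⟩ : A)
      else (fg.2 i : A), by
      constructor
      · ext i j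
        rw [Matrix.conjTranspose_apply, Matrix.of_apply, Matrix.of_apply]
        rcases lt_trichotomy i j with h | h | h
        · rw [dif_neg (not_lt.mpr h.le), dif_pos h, dif_pos h, star_star]
        · subst h
          rw [dif_neg (lt_irrefl i), dif_neg (lt_irrefl i)]
          exact (fg.2 i).2.2
        · rw [dif_pos h, dif_neg (not_lt.mpr h.le), dif_pos h]
      · intro i j
        rw [Matrix.of_apply]
        split_ifs with h h'
        · exact (fg.1 _).2
        · exact hIstar _ (fg.1 _).2
        · exact (fg.2 i).2.1⟩
  left_inv T := by
    apply Subtype.ext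
    ext i j
    show (Matrix.of _ : Matrix (Fin n) (Fin n) A) i j = T.1 i j
    rw [Matrix.of_apply]
    rcases lt_trichotomy i j with h | h | h
    · rw [dif_pos h]
    · subst h; rw [dif_neg (lt_irrefl i), dif_neg (lt_irrefl i)]
    · rw [dif_neg (not_lt.mpr h.le), dif_pos h]
      conv_rhs => rw [← T.2.1]
      rw [Matrix.conjTranspose_apply]
  right_inv fg := by
    refine Prod.ext (funext fun p => ?_) (funext fun i => ?_)
    · apply Subtype.ext
      show (Matrix.of _ : Matrix (Fin n) (Fin n) A) p.1.1 p.1.2 = _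
      rw [Matrix.of_apply, dif_pos p.2]
    · apply Subtype.ext
      show (Matrix.of _ : Matrix (Fin n) (Fin n) A) i i = _
      rw [Matrix.of_apply, dif_neg (lt_irrefl i), dif_neg (lt_irrefl i)]

theorem card_lt_pairs (n : ℕ) : Nat.card {p : Fin n × Fin n // p.1 < p.2} = n.choose 2 := by
  have e : {p : Fin n × Fin n // p.1 < p.2} ≃ Σ i : Fin n, {j : Fin n // i < j} :=
    { toFun := fun q => ⟨q.1.1, ⟨q.1.2, q.2⟩⟩
      invFun := fun s => ⟨(s.1, s.2.1), s.2.2⟩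
      left_inv := fun ⟨⟨a, b⟩, h⟩ => rfl
      right_inv := fun ⟨a, ⟨b, h⟩⟩ => rfl }
  rw [Nat.card_congr e, Nat.card_eq_fintype_card, Fintype.card_sigma]
  have hcard : ∀ i : Fin n, Fintype.card {j : Fin n // i < j} = n - 1 - i := by
    intro i
    rw [Fintype.card_congr (Equiv.subtypeEquivRight (fun j => Iff.rfl) :
      {j : Fin n // i < j} ≃ {j : Fin n // j ∈ Set.Ioi i}), Fintype.card_Ioi, Fin.card_Ioi]
  rw [Finset.sum_congr rfl (fun i _ => hcard i)]
  rw [Fin.sum_univ_eq_sum_range (fun i => n - 1 - i),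
    Finset.sum_range_reflect (fun i => i) n, Nat.choose_two_right, Finset.sum_range_id]
end


/-- Let `A` be a finite local ring (not necessarily commutative) with Jacobson
radical `r` (= the set of non-units) and residue field of odd characteristic (equivalently,
`2` is a unit of `A`), equipped with an involution `*` such that `a - a* ∈ r` for all `a`;
let `m ≥ 1`.  For every proper `*`-invariant two-sided ideal `I` of `A`, the kernel of the
reduction map `U_{2m}(A) → U_{2m}(A/I)`, i.e. the set of `X` with `XᴴJ₀X = J₀` and `X ≡ 1`
entrywise mod `I`, has cardinality `|I|^(2m² - m) * |I ∩ 𝔪|^(2m)` where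
`𝔪 = {a ∈ r : a* = a}`. -/
theorem stmt13 {A : Type*} [Ring A] [StarRing A] [IsLocalRing A] [Finite A]
    (h2 : IsUnit (2 : A)) (hsk : ∀ a : A, a - star a ∈ nonunits A)
    {m : ℕ} (hm : 1 ≤ m)
    (I : TwoSidedIdeal A) (hI : I ≠ ⊤) (hIstar : ∀ a ∈ I, star a ∈ I) :
    Nat.card {X : Matrix (Fin (2 * m)) (Fin (2 * m)) A //
        Xᴴ * stdSymplectic A m * X = stdSymplectic A m ∧ ∀ i j, (X - 1) i j ∈ I} =
      Nat.card I ^ (2 * m ^ 2 - m) *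
        Nat.card {a : A // a ∈ I ∧ a ∈ nonunits A ∧ star a = a} ^ (2 * m) := by
  classical
  -- the ideal consists of nonunits
  have hInu : ∀ a ∈ I, a ∈ nonunits A := by
    intro a ha hu
    obtain ⟨u, rfl⟩ := hu
    have h1 : (1 : A) ∈ I := by
      have := I.mul_mem_left (↑u⁻¹) _ ha
      rwa [u.inv_mul] at this
    apply hI
    refine SetLike.ext fun x => ⟨fun _ => trivial, fun _ => ?_⟩
    have := I.mul_mem_left x _ h1
    rwa [mul_one] at this
  set M := Matrix (Fin (2 * m)) (Fin (2 * m)) A with hM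
  set J : M := stdSymplectic A m with hJdef
  have h2M : IsUnit (2 : M) := by
    have := (Matrix.scalar (Fin (2 * m))).isUnit_map h2
    rwa [map_ofNat] at this
  have memL : ∀ (C B : M), (∀ i j, B i j ∈ I) → ∀ i j, (C * B) i j ∈ I := by
    intro C B hB i j
    rw [Matrix.mul_apply]
    exact sum_mem fun l _ => I.mul_mem_left _ _ (hB l j)
  have memR : ∀ (B C : M), (∀ i j, B i j ∈ I) → ∀ i j, (B * C) i j ∈ I := by
    intro B C hB i j
    rw [Matrix.mul_apply]
    exact sum_mem fun l _ => I.mul_mem_right _ _ (hB i l)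
  have hJs : star J = -J := stdSymplectic_conjTranspose
  have hJJ : J * J = -1 := stdSymplectic_mul_self
  have hSnu : ∀ S : M, (∀ i j, S i j ∈ I) → IsUnit (1 + S) := fun S hS =>
    isUnit_one_add_matrix S fun i j => hInu _ (hS i j)
  have hunitX : ∀ X : M, (∀ i j, (X - 1) i j ∈ I) → IsUnit (1 + X) := by
    intro X hX
    have h1 : 1 + X = 2 * (1 + Ring.inverse (2 : M) * (X - 1)) := by
      rw [mul_add, mul_one, ← mul_assoc, Ring.mul_inverse_cancel _ h2M, one_mul,
        show (2 : M) = 1 + 1 from one_add_one_eq_two.symm]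
      abel
    rw [h1]
    exact h2M.mul (hSnu _ (memL _ _ hX))
  have hCayEnt : ∀ X : M, (∀ i j, (X - 1) i j ∈ I) → ∀ i j, (cay X) i j ∈ I := by
    intro X hX i j
    have h1X : ∀ i j, (1 - X) i j ∈ I := by
      intro i j
      have : (1 - X) i j = -((X - 1) i j) := by
        rw [Matrix.sub_apply, Matrix.sub_apply, neg_sub]
      rw [this]
      exact neg_mem (hX i j)
    exact memR _ _ h1X i j
  -- the Cayley-transform equivalence with Hermitian matrices
  let e : {X : M // Xᴴ * J * X = J ∧ ∀ i j, (X - 1) i j ∈ I} ≃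
      {T : M // Tᴴ = T ∧ ∀ i j, T i j ∈ I} :=
    { toFun := fun X =>
        ⟨J * cay X.1, by
          have hh := (herm_iff hJs h2M (hunitX X.1 X.2.2)).mpr (by
            rw [Matrix.star_eq_conjTranspose]; exact X.2.1)
          rw [← cay_def] at hh
          rw [← Matrix.star_eq_conjTranspose]
          exact hh, memL _ _ (hCayEnt X.1 X.2.2)⟩
      invFun := fun T => by
        refine ⟨cay (-(J * T.1)), ?_, ?_⟩
        · have hYent : ∀ i j, (-(J * T.1)) i j ∈ I := fun i j => by
            rw [Matrix.neg_apply]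
            exact neg_mem (memL J T.1 T.2.2 i j)
          have hY : IsUnit (1 + -(J * T.1)) := hSnu _ hYent
          have hXid : J * cay (cay (-(J * T.1))) = T.1 := by
            rw [cay_cay h2M hY, mul_neg, ← mul_assoc, hJJ, neg_one_mul, neg_neg]
          have hh := (herm_iff hJs h2M (cay_isUnit_one_add h2M hY)).mp (by
            rw [← cay_def (cay (-(J * T.1))), hXid, Matrix.star_eq_conjTranspose]
            exact T.2.1)
          rw [← Matrix.star_eq_conjTranspose]
          exact hh
        · intro i j
          have hYent : ∀ i j, (-(J * T.1)) i j ∈ I := fun i j => by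
            rw [Matrix.neg_apply]
            exact neg_mem (memL J T.1 T.2.2 i j)
          have hY : IsUnit (1 + -(J * T.1)) := hSnu _ hYent
          have hsub : cay (-(J * T.1)) - 1
              = -(2 * (-(J * T.1) * Ring.inverse (1 + -(J * T.1)))) := by
            rw [← cay_one_sub hY]
            noncomm_ring
          rw [hsub]
          refine neg_mem (memL _ _ ?_ i j)
          exact memR _ _ hYent
      left_inv := fun X => by
        apply Subtype.ext
        show cay (-(J * (J * cay X.1))) = X.1
        have h1 : -(J * (J * cay X.1)) = cay X.1 := by
          rw [← mul_assoc, hJJ, neg_one_mul, neg_neg]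
        rw [h1, cay_cay h2M (hunitX X.1 X.2.2)]
      right_inv := fun T => by
        apply Subtype.ext
        show J * cay (cay (-(J * T.1))) = T.1
        have hYent : ∀ i j, (-(J * T.1)) i j ∈ I := fun i j => by
          rw [Matrix.neg_apply]
          exact neg_mem (memL J T.1 T.2.2 i j)
        have hY : IsUnit (1 + -(J * T.1)) := hSnu _ hYent
        rw [cay_cay h2M hY, mul_neg, ← mul_assoc, hJJ, neg_one_mul, neg_neg] }
  rw [Nat.card_congr e, Nat.card_congr (hermEquiv I hIstar), Nat.card_prod,
    Nat.card_fun, Nat.card_fun, card_lt_pairs]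
  have hchoose : (2 * m).choose 2 = 2 * m ^ 2 - m := by
    rw [Nat.choose_two_right]
    have h1 : m ≤ 2 * m ^ 2 := by nlinarith
    have h2' : 1 ≤ 2 * m := by omega
    have key : 2 * m * (2 * m - 1) = (2 * m ^ 2 - m) * 2 := by
      zify [h1, h2']
      ring
    rw [key, Nat.mul_div_cancel _ (by norm_num)]
  have hsym : Nat.card {a : A // a ∈ I ∧ star a = a}
      = Nat.card {a : A // a ∈ I ∧ a ∈ nonunits A ∧ star a = a} := by
    refine Nat.card_congr (Equiv.subtypeEquivRight fun a => ?_).symm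
    exact ⟨fun ⟨h1, _, h3⟩ => ⟨h1, h3⟩, fun ⟨h1, h3⟩ => ⟨h1, hInu a h1, h3⟩⟩
  rw [hchoose, hsym, Nat.card_eq_fintype_card (α := Fin (2 * m)), Fintype.card_fin]
end

section
/- Let A be a finite local ring with involution * such that 2 is a unit and a − a* lies in the Jacobson radical r for every a ∈ A. Let R = {a ∈ A : a* = a}, S = {a ∈ A : a* = −a} and 𝔪 = R ∩ r. Then for every s ∈ S, the number of pairs (a, b) ∈ A × A such that not both a and b lie in r and a*b − b*a = s equals (|A| − |r|)(|R| + |𝔪|) = (|A|² − |r|²)/|S|; in particular this number is independent of s. -/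
section helpers

variable {A : Type*} [Ring A] [Finite A]

private lemma aux_unit_of_left_inv {u a : A} (h : u * a = 1) : IsUnit a := by
  have hinj : Function.Injective (fun x : A => a * x) := by
    intro x y hxy
    have h2 : u * (a * x) = u * (a * y) := congrArg (u * ·) hxy
    rwa [← mul_assoc, ← mul_assoc, h, one_mul, one_mul] at h2
  obtain ⟨v, hv⟩ := (Finite.injective_iff_surjective.mp hinj) 1
  simp only at hv
  have huv : v = u := by
    have h3 : u * (a * v) = u * 1 := congrArg (u * ·) hv
    rwa [← mul_assoc, h, one_mul, mul_one] at h3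
  exact ⟨⟨a, v, hv, by rw [huv, h]⟩, rfl⟩

private lemma aux_unit_of_right_inv {a u : A} (h : a * u = 1) : IsUnit a := by
  have hu : IsUnit u := aux_unit_of_left_inv h
  have ha : a = ↑hu.unit⁻¹ := by
    calc a = a * (u * ↑hu.unit⁻¹) := by rw [hu.mul_val_inv, mul_one]
      _ = (a * u) * ↑hu.unit⁻¹ := by rw [mul_assoc]
      _ = ↑hu.unit⁻¹ := by rw [h, one_mul]
  rw [ha]
  exact (hu.unit⁻¹).isUnit

private lemma aux_mul_nonunit_left (x : A) {a : A} (ha : a ∈ nonunits A) :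
    x * a ∈ nonunits A := by
  rw [mem_nonunits_iff] at *
  intro h
  have h1 : (↑h.unit⁻¹ * x) * a = 1 := by rw [mul_assoc]; exact h.val_inv_mul
  exact ha (aux_unit_of_left_inv h1)

private lemma aux_mul_nonunit_right {a : A} (x : A) (ha : a ∈ nonunits A) :
    a * x ∈ nonunits A := by
  rw [mem_nonunits_iff] at *
  intro h
  have h1 : a * (x * ↑h.unit⁻¹) = 1 := by rw [← mul_assoc]; exact h.mul_val_inv
  exact ha (aux_unit_of_right_inv h1)

private lemma aux_neg_nonunit {a : A} (ha : a ∈ nonunits A) : -a ∈ nonunits A := by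
  have := aux_mul_nonunit_left (-1 : A) ha
  rwa [neg_one_mul] at this

private lemma aux_nonunits_add [IsLocalRing A] {a b : A} (ha : a ∈ nonunits A)
    (hb : b ∈ nonunits A) : a + b ∈ nonunits A := by
  rw [mem_nonunits_iff]
  intro h
  have h1 : (↑h.unit⁻¹ * a) + (↑h.unit⁻¹ * b) = 1 := by rw [← mul_add]; exact h.val_inv_mul
  rcases IsLocalRing.isUnit_or_isUnit_of_add_one h1 with h2 | h2
  · exact (mem_nonunits_iff.mp (aux_mul_nonunit_left _ ha)) h2
  · exact (mem_nonunits_iff.mp (aux_mul_nonunit_left _ hb)) h2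

private lemma aux_star_nonunit [StarRing A] {a : A} :
    star a ∈ nonunits A ↔ a ∈ nonunits A := by
  simp [mem_nonunits_iff, isUnit_star]

private lemma aux_unit_of_not {a : A} (h : ¬ a ∈ nonunits A) : IsUnit a := by
  rwa [mem_nonunits_iff, not_not] at h

private lemma aux_card_split {α : Type*} [Finite α] (P Q : α → Prop) :
    Nat.card {x // P x} = Nat.card {x // P x ∧ Q x} + Nat.card {x // P x ∧ ¬ Q x} := by
  classical
  rw [← Nat.card_sum]
  exact Nat.card_congr ((Equiv.sumCompl (fun x : {x // P x} => Q x.1)).symm.trans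
    (Equiv.sumCongr (Equiv.subtypeSubtypeEquivSubtypeInter P Q)
      (Equiv.subtypeSubtypeEquivSubtypeInter P (fun x => ¬ Q x))))

private lemma aux_card_compl {α : Type*} [Finite α] (P : α → Prop) :
    Nat.card α = Nat.card {x // P x} + Nat.card {x // ¬ P x} := by
  classical
  rw [← Nat.card_sum]
  exact (Nat.card_congr (Equiv.sumCompl P)).symm

end helpers

/-- Let `A` be a finite local ring with involution `*` such that `2` is a unit
and `a - a*` is a non-unit for every `a`.  Let `R = {a : a* = a}`, `S = {a : a* = -a}` and
`𝔪 = R ∩ r` where `r = nonunits A` is the Jacobson radical.  Then for every `s ∈ S`, the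
number of pairs `(a, b) ∈ A × A` with not both `a, b` non-units and `a*b - b*a = s` equals
`(|A| - |r|) * (|R| + |𝔪|)`, and multiplied by `|S|` it equals `|A|² - |r|²`; in particular
it does not depend on `s`. -/
theorem stmt14 {A : Type*} [Ring A] [StarRing A] [IsLocalRing A] [Finite A]
    (h2 : IsUnit (2 : A)) (hsk : ∀ a : A, a - star a ∈ nonunits A)
    (s : A) (hs : star s = -s) :
    Nat.card {p : A × A //
        ¬(p.1 ∈ nonunits A ∧ p.2 ∈ nonunits A) ∧ star p.1 * p.2 - star p.2 * p.1 = s} =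
      (Nat.card A - Nat.card (nonunits A)) *
        (Nat.card {a : A // star a = a} +
          Nat.card {a : A // star a = a ∧ a ∈ nonunits A}) ∧
    Nat.card {p : A × A //
        ¬(p.1 ∈ nonunits A ∧ p.2 ∈ nonunits A) ∧ star p.1 * p.2 - star p.2 * p.1 = s} *
      Nat.card {a : A // star a = -a} =
      Nat.card A ^ 2 - Nat.card (nonunits A) ^ 2 := by
  classical
  set t : A := ↑h2.unit⁻¹ with ht
  have h2t : (2 : A) * t = 1 := h2.mul_val_inv
  have ht2 : t * 2 = 1 := h2.val_inv_mul
  have star2 : star (2 : A) = 2 := by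
    rw [show (2 : A) = 1 + 1 from one_add_one_eq_two.symm]; simp
  have tstar : star t = t := by
    have h1 : star t * 2 = 1 := by
      have h0 := congrArg star h2t
      rwa [star_mul, star2, star_one] at h0
    calc star t = star t * (2 * t) := by rw [h2t, mul_one]
      _ = (star t * 2) * t := by rw [mul_assoc]
      _ = t := by rw [h1, one_mul]
  have tcomm : ∀ x : A, t * x = x * t := by
    intro x
    calc t * x = t * x * (2 * t) := by rw [h2t, mul_one]
      _ = t * (x * 2) * t := by rw [← mul_assoc, mul_assoc t x 2]
      _ = t * (2 * x) * t := by rw [mul_two, two_mul]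
      _ = x * t := by rw [← mul_assoc t 2 x, ht2, one_mul]
  have cancel2 : ∀ x : A, t * (2 * x) = x := fun x => by rw [← mul_assoc, ht2, one_mul]
  have skew_nonunit : ∀ a : A, star a = -a → a ∈ nonunits A := by
    intro a ha
    have h2a : 2 * a ∈ nonunits A := by
      have h0 := hsk a; rwa [ha, sub_neg_eq_add, ← two_mul] at h0
    have h1 := aux_mul_nonunit_left t h2a
    rwa [cancel2] at h1
  have hsr : s ∈ nonunits A := skew_nonunit s hs
  have hnon2 : ∀ c : A, (2 * c - s ∈ nonunits A ↔ c ∈ nonunits A) := by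
    intro c
    constructor
    · intro h
      have h2c : 2 * c ∈ nonunits A := by
        have h0 := aux_nonunits_add h hsr
        have h1 : 2 * c - s + s = 2 * c := by abel
        rwa [h1] at h0
      have h3 := aux_mul_nonunit_left t h2c
      rwa [cancel2] at h3
    · intro h
      rw [sub_eq_add_neg]
      exact aux_nonunits_add (aux_mul_nonunit_left 2 h) (aux_neg_nonunit hsr)
  -- equivalence between solutions of c - c* = s and hermitian elements
  have e1mem : ∀ c : A, c - star c = s → star (2 * c - s) = 2 * c - s := by
    intro c hc
    have hsc : star c = c - s := by rw [← hc]; exact (sub_sub_cancel _ _).symm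
    rw [star_sub, star_mul, star2, hs, hsc]
    rw [sub_mul]
    simp only [mul_two, two_mul]
    abel
  have e2mem : ∀ h : A, star h = h → (t * (h + s)) - star (t * (h + s)) = s := by
    intro h hh
    have h1 : star (t * (h + s)) = t * (h - s) := by
      rw [star_mul, star_add, hh, hs, tstar, ← sub_eq_add_neg, ← tcomm]
    rw [h1, ← mul_sub]
    have h3 : h + s - (h - s) = 2 * s := by rw [two_mul]; abel
    rw [h3, cancel2]
  have card_e1 : Nat.card {c : A // c - star c = s} = Nat.card {a : A // star a = a} := by
    refine Nat.card_congr ⟨fun c => ⟨2 * c.1 - s, e1mem c.1 c.2⟩,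
      fun h => ⟨t * (h.1 + s), e2mem h.1 h.2⟩, ?_, ?_⟩
    · intro c
      apply Subtype.ext
      show t * (2 * c.1 - s + s) = c.1
      have h1 : 2 * c.1 - s + s = 2 * c.1 := by abel
      rw [h1, cancel2]
    · intro h
      apply Subtype.ext
      show 2 * (t * (h.1 + s)) - s = h.1
      rw [← mul_assoc, h2t, one_mul]
      abel
  have card_e2 : Nat.card {c : A // (c - star c = s) ∧ c ∈ nonunits A} =
      Nat.card {a : A // star a = a ∧ a ∈ nonunits A} := by
    refine Nat.card_congr ⟨fun c => ⟨2 * c.1 - s, e1mem c.1 c.2.1, (hnon2 c.1).mpr c.2.2⟩,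
      fun h => ⟨t * (h.1 + s), e2mem h.1 h.2.1,
        aux_mul_nonunit_left t (aux_nonunits_add h.2.2 hsr)⟩, ?_, ?_⟩
    · intro c
      apply Subtype.ext
      show t * (2 * c.1 - s + s) = c.1
      have h1 : 2 * c.1 - s + s = 2 * c.1 := by abel
      rw [h1, cancel2]
    · intro h
      apply Subtype.ext
      show 2 * (t * (h.1 + s)) - s = h.1
      rw [← mul_assoc, h2t, one_mul]
      abel
  -- the two pieces of the main count
  have cardP1 : Nat.card {p : A × A //
      ¬ p.1 ∈ nonunits A ∧ star p.1 * p.2 - star p.2 * p.1 = s} =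
      Nat.card ({a : A // ¬ a ∈ nonunits A} × {c : A // c - star c = s}) := by
    refine Nat.card_congr ⟨
      fun p => (⟨p.1.1, p.2.1⟩, ⟨star p.1.1 * p.1.2, by
        have := p.2.2
        rwa [star_mul, star_star]⟩),
      fun y => ⟨(y.1.1, ↑((isUnit_star.mpr (aux_unit_of_not y.1.2)).unit⁻¹) * y.2.1), ?_, ?_⟩,
      ?_, ?_⟩
    · exact y.1.2
    · show star y.1.1 * (↑((isUnit_star.mpr (aux_unit_of_not y.1.2)).unit⁻¹) * y.2.1) -
        star (↑((isUnit_star.mpr (aux_unit_of_not y.1.2)).unit⁻¹) * y.2.1) * y.1.1 = s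
      have hu := isUnit_star.mpr (aux_unit_of_not y.1.2)
      have h1 : star y.1.1 * (↑hu.unit⁻¹ * y.2.1) = y.2.1 := by
        rw [← mul_assoc, hu.mul_val_inv, one_mul]
      rw [h1]
      have h2' := congrArg star h1
      rw [star_mul, star_star] at h2'
      rw [h2']
      exact y.2.2
    · intro p
      apply Subtype.ext
      refine Prod.ext rfl ?_
      show ↑((isUnit_star.mpr (aux_unit_of_not p.2.1)).unit⁻¹) * (star p.1.1 * p.1.2) = p.1.2
      have hu := isUnit_star.mpr (aux_unit_of_not p.2.1)
      rw [← mul_assoc, hu.val_inv_mul, one_mul]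
    · intro y
      refine Prod.ext (Subtype.ext rfl) (Subtype.ext ?_)
      show star y.1.1 * (↑((isUnit_star.mpr (aux_unit_of_not y.1.2)).unit⁻¹) * y.2.1) = y.2.1
      have hu := isUnit_star.mpr (aux_unit_of_not y.1.2)
      rw [← mul_assoc, hu.mul_val_inv, one_mul]
  have cardP2 : Nat.card {p : A × A //
      (p.1 ∈ nonunits A ∧ ¬ p.2 ∈ nonunits A) ∧ star p.1 * p.2 - star p.2 * p.1 = s} =
      Nat.card ({b : A // ¬ b ∈ nonunits A} ×
        {c : A // (c - star c = s) ∧ c ∈ nonunits A}) := by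
    refine Nat.card_congr ⟨
      fun p => (⟨p.1.2, p.2.1.2⟩, ⟨star p.1.1 * p.1.2, ⟨by
          have := p.2.2
          rwa [star_mul, star_star],
        aux_mul_nonunit_right _ (aux_star_nonunit.mpr p.2.1.1)⟩⟩),
      fun y => ⟨(star (y.2.1 * ↑((aux_unit_of_not y.1.2).unit⁻¹)), y.1.1), ?_, ?_⟩, ?_, ?_⟩
    · constructor
      · exact aux_star_nonunit.mpr (aux_mul_nonunit_right _ y.2.2.2)
      · exact y.1.2
    · have hu := aux_unit_of_not y.1.2
      have hcb : y.2.1 * ↑hu.unit⁻¹ * y.1.1 = y.2.1 := by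
        rw [mul_assoc, hu.val_inv_mul, mul_one]
      show star (star (y.2.1 * ↑hu.unit⁻¹)) * y.1.1 -
          star y.1.1 * star (y.2.1 * ↑hu.unit⁻¹) = s
      rw [star_star, ← star_mul, hcb]
      exact y.2.2.1
    · intro p
      apply Subtype.ext
      refine Prod.ext ?_ ?_
      · show star (star p.1.1 * p.1.2 * ↑((aux_unit_of_not p.2.1.2).unit⁻¹)) = p.1.1
        have hu := aux_unit_of_not p.2.1.2
        rw [mul_assoc, hu.mul_val_inv, mul_one, star_star]
      · rfl
    · intro y
      refine Prod.ext (Subtype.ext rfl) (Subtype.ext ?_)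
      have hu := aux_unit_of_not y.1.2
      show star (star (y.2.1 * ↑hu.unit⁻¹)) * y.1.1 = y.2.1
      rw [star_star, mul_assoc, hu.val_inv_mul, mul_one]
  -- the decomposition A ≃ R × S (and r ≃ 𝔪 × S)
  have eRSfst : ∀ x : A, star (t * (x + star x)) = t * (x + star x) := by
    intro x
    rw [star_mul, star_add, star_star, tstar, ← tcomm, add_comm]
  have eRSsnd : ∀ x : A, star (t * (x - star x)) = -(t * (x - star x)) := by
    intro x
    rw [star_mul, star_sub, star_star, tstar, ← tcomm, ← neg_sub x (star x), mul_neg]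
  have eRSleft : ∀ x : A, t * (x + star x) + t * (x - star x) = x := by
    intro x
    rw [← mul_add]
    have h1 : x + star x + (x - star x) = 2 * x := by rw [two_mul]; abel
    rw [h1, cancel2]
  have eRSright1 : ∀ h w : A, star h = h → star w = -w → t * ((h + w) + star (h + w)) = h := by
    intro h w hh hw
    rw [star_add, hh, hw]
    have h1 : h + w + (h + -w) = 2 * h := by rw [two_mul]; abel
    rw [h1, cancel2]
  have eRSright2 : ∀ h w : A, star h = h → star w = -w → t * ((h + w) - star (h + w)) = w := by
    intro h w hh hw
    rw [star_add, hh, hw]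
    have h1 : h + w - (h + -w) = 2 * w := by rw [two_mul]; abel
    rw [h1, cancel2]
  have cardRS : Nat.card A =
      Nat.card {a : A // star a = a} * Nat.card {a : A // star a = -a} := by
    rw [← Nat.card_prod]
    refine Nat.card_congr ⟨fun x => (⟨t * (x + star x), eRSfst x⟩, ⟨t * (x - star x), eRSsnd x⟩),
      fun y => y.1.1 + y.2.1, fun x => eRSleft x, ?_⟩
    rintro ⟨⟨h, hh⟩, ⟨w, hw⟩⟩
    refine Prod.ext (Subtype.ext ?_) (Subtype.ext ?_)
    · exact eRSright1 h w hh hw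
    · exact eRSright2 h w hh hw
  have herm_mem : ∀ x : A, x ∈ nonunits A → t * (x + star x) ∈ nonunits A := by
    intro x hx
    have h1 : (2 : A) * x + -(x - star x) ∈ nonunits A :=
      aux_nonunits_add (aux_mul_nonunit_left 2 hx) (aux_neg_nonunit (hsk x))
    have h2 : (2 : A) * x + -(x - star x) = x + star x := by rw [two_mul]; abel
    rw [h2] at h1
    exact aux_mul_nonunit_left t h1
  have cardr : Nat.card (nonunits A) =
      Nat.card {a : A // star a = a ∧ a ∈ nonunits A} * Nat.card {a : A // star a = -a} := by
    rw [← Nat.card_prod]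
    refine Nat.card_congr ⟨fun x => (⟨t * (x.1 + star x.1), eRSfst x.1, herm_mem x.1 x.2⟩,
        ⟨t * (x.1 - star x.1), eRSsnd x.1⟩),
      fun y => ⟨y.1.1 + y.2.1, aux_nonunits_add y.1.2.2 (skew_nonunit y.2.1 y.2.2)⟩,
      fun x => Subtype.ext (eRSleft x.1), ?_⟩
    rintro ⟨⟨h, hh, hhm⟩, ⟨w, hw⟩⟩
    refine Prod.ext (Subtype.ext ?_) (Subtype.ext ?_)
    · exact eRSright1 h w hh hw
    · exact eRSright2 h w hh hw
  -- put things together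
  have hsplit := aux_card_split
    (fun p : A × A => ¬(p.1 ∈ nonunits A ∧ p.2 ∈ nonunits A) ∧
      star p.1 * p.2 - star p.2 * p.1 = s)
    (fun p : A × A => p.1 ∈ nonunits A)
  have hc1 : Nat.card {p : A × A //
      (¬(p.1 ∈ nonunits A ∧ p.2 ∈ nonunits A) ∧ star p.1 * p.2 - star p.2 * p.1 = s) ∧
        ¬ p.1 ∈ nonunits A} =
      Nat.card {a : A // ¬ a ∈ nonunits A} * Nat.card {a : A // star a = a} := by
    rw [Nat.card_congr (Equiv.subtypeEquivRight
      (q := fun p : A × A => ¬ p.1 ∈ nonunits A ∧ star p.1 * p.2 - star p.2 * p.1 = s)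
      (fun p => by tauto))]
    rw [cardP1, Nat.card_prod, card_e1]
  have hc2 : Nat.card {p : A × A //
      (¬(p.1 ∈ nonunits A ∧ p.2 ∈ nonunits A) ∧ star p.1 * p.2 - star p.2 * p.1 = s) ∧
        p.1 ∈ nonunits A} =
      Nat.card {a : A // ¬ a ∈ nonunits A} *
        Nat.card {a : A // star a = a ∧ a ∈ nonunits A} := by
    rw [Nat.card_congr (Equiv.subtypeEquivRight
      (q := fun p : A × A => (p.1 ∈ nonunits A ∧ ¬ p.2 ∈ nonunits A) ∧
        star p.1 * p.2 - star p.2 * p.1 = s)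
      (fun p => by tauto))]
    rw [cardP2, Nat.card_prod, card_e2]
  have hcompl := aux_card_compl (fun a : A => a ∈ nonunits A)
  have hcompl' : Nat.card {x : A // x ∈ nonunits A} = Nat.card (nonunits A) := rfl
  rw [hcompl'] at hcompl
  have hcne : Nat.card {a : A // ¬ a ∈ nonunits A} =
      Nat.card A - Nat.card (nonunits A) := by omega
  have hle : Nat.card (nonunits A) ≤ Nat.card A := by omega
  have hmain : Nat.card {p : A × A //
      ¬(p.1 ∈ nonunits A ∧ p.2 ∈ nonunits A) ∧ star p.1 * p.2 - star p.2 * p.1 = s} =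
      (Nat.card A - Nat.card (nonunits A)) *
        (Nat.card {a : A // star a = a} +
          Nat.card {a : A // star a = a ∧ a ∈ nonunits A}) := by
    rw [hsplit, hc1, hc2, hcne]
    ring
  refine ⟨hmain, ?_⟩
  rw [hmain, mul_assoc, add_mul, ← cardRS, ← cardr]
  have hsq : Nat.card (nonunits A) ^ 2 ≤ Nat.card A ^ 2 := Nat.pow_le_pow_left hle 2
  zify [hle, hsq]
  ring
end

section
/- Let A be a finite local ring with involution * such that 2 is a unit and a − a* lies in the Jacobson radical r for every a ∈ A, let S = {a ∈ A : a* = −a}, and let m ≥ 1. Then for every s ∈ S, the number of unimodular column vectors v ∈ A^{2m} with length vᴴJ₀v = s equals (|A|^{2m} − |r|^{2m})/|S|; in particular this number is independent of s. -/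
open Matrix

namespace Stmt15Aux

/-- The partner index: `i ↦ i + m` if `i < m`, else `i - m`. -/
def partner (m : ℕ) (i : Fin (2 * m)) : Fin (2 * m) :=
  if h : (i : ℕ) < m then ⟨(i : ℕ) + m, by omega⟩ else ⟨(i : ℕ) - m, by have := i.isLt; omega⟩

lemma partner_coe (m : ℕ) (i : Fin (2 * m)) :
    ((partner m i : Fin (2 * m)) : ℕ) = if (i : ℕ) < m then (i : ℕ) + m else (i : ℕ) - m := by
  unfold partner; split <;> rfl

lemma partner_ne {m : ℕ} (hm : 1 ≤ m) (i : Fin (2 * m)) : partner m i ≠ i := by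
  have h := partner_coe m i
  have := i.isLt
  intro hEq
  rw [hEq] at h
  split at h <;> omega

lemma partner_partner {m : ℕ} (i : Fin (2 * m)) : partner m (partner m i) = i := by
  have h1 := partner_coe m i
  have h2 := partner_coe m (partner m i)
  have := i.isLt
  have := (partner m i).isLt
  apply Fin.ext
  rw [h2, h1]
  split_ifs <;> omega

lemma partner_lt_iff {m : ℕ} (hm : 1 ≤ m) (i : Fin (2 * m)) :
    ((partner m i : ℕ) < m) ↔ ¬ ((i : ℕ) < m) := by
  have h1 := partner_coe m i
  have := i.isLt
  rw [h1]; split_ifs <;> simp <;> omega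

variable {A : Type*} [Ring A]

lemma stdSymplectic_apply {m : ℕ} (hm : 1 ≤ m) (i j : Fin (2 * m)) :
    stdSymplectic A m i j =
      if j = partner m i then (if (i : ℕ) < m then (1 : A) else -1) else 0 := by
  have h1 := partner_coe m i
  have hi := i.isLt
  have hj := j.isLt
  have hfin : (j = partner m i) ↔ ((j : ℕ) = (partner m i : ℕ)) := Fin.ext_iff
  rw [stdSymplectic, Matrix.of_apply]
  by_cases hc : (i : ℕ) < m
  · simp only [hc, if_true] at h1 ⊢
    by_cases hd : (i : ℕ) + m = (j : ℕ)
    · rw [if_pos hd, if_pos (by rw [hfin]; omega)]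
    · rw [if_neg hd, if_neg (by omega), if_neg (by rw [hfin]; omega)]
  · simp only [hc, if_false] at h1 ⊢
    by_cases hd : (j : ℕ) + m = (i : ℕ)
    · rw [if_neg (by omega), if_pos hd, if_pos (by rw [hfin]; omega)]
    · rw [if_neg (by omega), if_neg hd, if_neg (by rw [hfin]; omega)]

lemma stdSymplectic_apply_ne {m : ℕ} (hm : 1 ≤ m) {i j : Fin (2 * m)}
    (h : j ≠ partner m i) : stdSymplectic A m i j = 0 := by
  rw [stdSymplectic_apply hm, if_neg h]

lemma stdSymplectic_apply_partner {m : ℕ} (hm : 1 ≤ m) (i : Fin (2 * m)) :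
    stdSymplectic A m i (partner m i) = if (i : ℕ) < m then (1 : A) else -1 := by
  rw [stdSymplectic_apply hm, if_pos rfl]

lemma stdSymplectic_partner_apply {m : ℕ} (hm : 1 ≤ m) (i : Fin (2 * m)) :
    stdSymplectic A m (partner m i) i = if (i : ℕ) < m then (-1 : A) else 1 := by
  rw [stdSymplectic_apply hm, if_pos (partner_partner i).symm]
  have hl := partner_lt_iff hm i
  by_cases h : (i : ℕ) < m
  · rw [if_neg (by rw [hl]; exact fun c => c h), if_pos h]
  · rw [if_pos (hl.mpr h), if_neg h]

lemma stdSymplectic_diag {m : ℕ} (hm : 1 ≤ m) (i : Fin (2 * m)) :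
    stdSymplectic A m i i = 0 :=
  stdSymplectic_apply_ne hm (fun h => partner_ne hm i h.symm)

section Len
variable [StarRing A]

/-- The symplectic length of a vector. -/
def lenA (m : ℕ) (v : Fin (2 * m) → A) : A := star v ⬝ᵥ (stdSymplectic A m).mulVec v

lemma lenA_eq_sum (m : ℕ) (v : Fin (2 * m) → A) :
    lenA m v = ∑ i, ∑ j, star (v i) * (stdSymplectic A m i j * v j) := by
  unfold lenA dotProduct Matrix.mulVec
  refine Finset.sum_congr rfl fun i _ => ?_
  simp only [Pi.star_apply, dotProduct, Finset.mul_sum]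

lemma star_stdSymplectic_entry {m : ℕ} (hm : 1 ≤ m) (i j : Fin (2 * m)) :
    star (stdSymplectic A m i j) = stdSymplectic A m i j := by
  rw [stdSymplectic_apply hm]
  split_ifs <;> simp

lemma stdSymplectic_antisymm {m : ℕ} (hm : 1 ≤ m) (i j : Fin (2 * m)) :
    stdSymplectic A m j i = - stdSymplectic A m i j := by
  by_cases h : j = partner m i
  · subst h
    rw [stdSymplectic_partner_apply hm, stdSymplectic_apply_partner hm]
    split_ifs <;> simp
  · rw [stdSymplectic_apply_ne hm h, stdSymplectic_apply_ne hm, neg_zero]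
    intro hc
    exact h (by rw [hc, partner_partner])

lemma star_lenA {m : ℕ} (hm : 1 ≤ m) (v : Fin (2 * m) → A) :
    star (lenA m v) = - lenA m v := by
  conv_lhs => rw [lenA_eq_sum]
  calc star (∑ i, ∑ j, star (v i) * (stdSymplectic A m i j * v j))
      = ∑ i, ∑ j, (star (v j) * stdSymplectic A m i j) * v i := by
        rw [star_sum]
        refine Finset.sum_congr rfl fun i _ => ?_
        rw [star_sum]
        refine Finset.sum_congr rfl fun j _ => ?_
        rw [StarMul.star_mul, StarMul.star_mul, star_star, star_stdSymplectic_entry hm]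
    _ = ∑ i, ∑ j, (star (v i) * stdSymplectic A m j i) * v j := Finset.sum_comm
    _ = - lenA m v := by
        rw [lenA_eq_sum, ← Finset.sum_neg_distrib]
        refine Finset.sum_congr rfl fun i _ => ?_
        rw [← Finset.sum_neg_distrib]
        refine Finset.sum_congr rfl fun j _ => ?_
        rw [stdSymplectic_antisymm hm, mul_neg, neg_mul, mul_assoc]

lemma single_star {n : ℕ} [DecidableEq (Fin n)] (p : Fin n) (d : A) :
    star (Pi.single p d : Fin n → A) = Pi.single p (star d) := by
  funext j
  rw [Pi.star_apply]
  by_cases h : j = p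
  · subst h; rw [Pi.single_eq_same, Pi.single_eq_same]
  · rw [Pi.single_eq_of_ne h, Pi.single_eq_of_ne h, star_zero]

lemma update_eq_add_single {n : ℕ} [DecidableEq (Fin n)] (v : Fin n → A) (p : Fin n) (d : A) :
    Function.update v p (v p + d) = v + Pi.single p d := by
  funext j
  by_cases h : j = p
  · subst h; rw [Function.update_self, Pi.add_apply, Pi.single_eq_same]
  · rw [Function.update_of_ne h, Pi.add_apply, Pi.single_eq_of_ne h, add_zero]

lemma lenA_update {m : ℕ} (hm : 1 ≤ m) (v : Fin (2 * m) → A) (i₀ : Fin (2 * m)) (d : A) :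
    lenA m (Function.update v (partner m i₀) (v (partner m i₀) + d)) =
      lenA m v + (if (i₀ : ℕ) < m then star (v i₀) * d - star d * v i₀
        else star d * v i₀ - star (v i₀) * d) := by
  set J := stdSymplectic A m with hJ
  set p := partner m i₀ with hp
  rw [update_eq_add_single, lenA, star_add, single_star, Matrix.mulVec_add,
    Matrix.mulVec_single, add_dotProduct, dotProduct_add,
    dotProduct_add, single_dotProduct, single_dotProduct]
  rw [show (MulOpposite.op d • (stdSymplectic A m).col p) = fun i => stdSymplectic A m i p * d
    from rfl]
  beta_reduce
  have h1 : (star v ⬝ᵥ fun i => J i p * d) = star (v i₀) * (J i₀ p * d) := by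
    rw [dotProduct]
    refine Finset.sum_eq_single i₀ (fun i _ hne => ?_) (by simp)
    have : p ≠ partner m i := by
      intro hc
      exact hne (by rw [← partner_partner (m := m) i, ← hc, hp, partner_partner])
    rw [Pi.star_apply, hJ, stdSymplectic_apply_ne hm this, zero_mul, mul_zero]
  have h2 : star d * (J.mulVec v) p = star d * (J p i₀ * v i₀) := by
    congr 1
    rw [Matrix.mulVec, dotProduct]
    refine Finset.sum_eq_single i₀ (fun j _ hne => ?_) (by simp)
    have : j ≠ partner m p := by rw [hp, partner_partner]; exact hne
    rw [hJ, stdSymplectic_apply_ne hm this, zero_mul]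
  rw [h1, h2, stdSymplectic_diag hm, zero_mul, mul_zero, add_zero]
  have hlen : star v ⬝ᵥ stdSymplectic A m *ᵥ v = lenA m v := rfl
  rw [hlen, hJ, hp, stdSymplectic_apply_partner hm, stdSymplectic_partner_apply hm]
  split_ifs with h
  · rw [one_mul, neg_one_mul, mul_neg, add_assoc]
    congr 1
    rw [sub_eq_add_neg]
  · rw [one_mul, neg_one_mul, mul_neg, add_assoc]
    congr 1
    rw [sub_eq_add_neg, add_comm]

end Len

section Tweak
variable [StarRing A]

/-- The set of indices where `v` has a unit coordinate. -/
noncomputable def unitSet {n : ℕ} (v : Fin n → A) : Finset (Fin n) :=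
  letI := Classical.decPred fun i : Fin n => IsUnit (v i)
  Finset.univ.filter fun i => IsUnit (v i)

lemma mem_unitSet {n : ℕ} {v : Fin n → A} {i : Fin n} : i ∈ unitSet v ↔ IsUnit (v i) := by
  letI := Classical.decPred fun i : Fin n => IsUnit (v i)
  simp [unitSet]

/-- The least index at which `v` has a unit coordinate. -/
noncomputable def firstUnit {n : ℕ} (v : Fin n → A) (hv : ∃ i, IsUnit (v i)) : Fin n :=
  (unitSet v).min' (by obtain ⟨i, hi⟩ := hv; exact ⟨i, mem_unitSet.mpr hi⟩)

lemma firstUnit_isUnit {n : ℕ} (v : Fin n → A) (hv : ∃ i, IsUnit (v i)) :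
    IsUnit (v (firstUnit v hv)) :=
  mem_unitSet.mp (Finset.min'_mem _ _)

lemma firstUnit_min {n : ℕ} (v : Fin n → A) (hv : ∃ i, IsUnit (v i)) {j : Fin n}
    (hj : j < firstUnit v hv) : ¬ IsUnit (v j) := fun hu =>
  absurd (Finset.min'_le _ j (mem_unitSet.mpr hu)) (not_le.mpr hj)

lemma firstUnit_eq {n : ℕ} (v : Fin n → A) (hv : ∃ i, IsUnit (v i)) {i : Fin n}
    (h1 : IsUnit (v i)) (h2 : ∀ j, j < i → ¬ IsUnit (v j)) : firstUnit v hv = i :=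
  le_antisymm (Finset.min'_le _ _ (mem_unitSet.mpr h1))
    (le_of_not_gt fun hlt => h2 _ hlt (firstUnit_isUnit v hv))

open Classical in
/-- Tweak a vector: add a correction to the partner coordinate of the first unit. -/
noncomputable def tweak (m : ℕ) (c : A) (v : Fin (2 * m) → A) : Fin (2 * m) → A :=
  if hv : ∃ i, IsUnit (v i) then
    Function.update v (partner m (firstUnit v hv))
      (v (partner m (firstUnit v hv)) +
        Ring.inverse (star (v (firstUnit v hv))) *
          (if ((firstUnit v hv : ℕ)) < m then c else -c))
  else v

lemma tweak_eq {m : ℕ} (c : A) (v : Fin (2 * m) → A) (hv : ∃ i, IsUnit (v i)) :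
    tweak m c v = Function.update v (partner m (firstUnit v hv))
      (v (partner m (firstUnit v hv)) +
        Ring.inverse (star (v (firstUnit v hv))) *
          (if ((firstUnit v hv : ℕ)) < m then c else -c)) := by
  unfold tweak
  rw [dif_pos hv]

lemma tweak_apply_ne {m : ℕ} (c : A) (v : Fin (2 * m) → A) (hv : ∃ i, IsUnit (v i))
    {j : Fin (2 * m)} (hj : j ≠ partner m (firstUnit v hv)) : tweak m c v j = v j := by
  rw [tweak_eq c v hv, Function.update_of_ne hj]

variable [IsLocalRing A]

lemma mul_nonunit {u x : A} (hu : IsUnit u) (hx : x ∈ nonunits A) : u * x ∈ nonunits A := by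
  intro h
  obtain ⟨w, hw⟩ := hu
  rw [← hw] at h
  exact hx ((Units.isUnit_units_mul w x).mp h)

lemma nonunits_add' {a b : A} (ha : a ∈ nonunits A) (hb : b ∈ nonunits A) :
    a + b ∈ nonunits A := by
  intro h
  obtain ⟨u, hu⟩ := h
  have h1 : (↑u⁻¹ : A) * a + (↑u⁻¹ : A) * b = 1 := by
    rw [← mul_add, ← hu, Units.inv_mul]
  rcases IsLocalRing.isUnit_or_isUnit_of_add_one h1 with h2 | h2
  · exact ha ((Units.isUnit_units_mul u⁻¹ a).mp h2)
  · exact hb ((Units.isUnit_units_mul u⁻¹ b).mp h2)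

lemma neg_nonunit {x : A} (hx : x ∈ nonunits A) : -x ∈ nonunits A := by
  rw [mem_nonunits_iff] at hx ⊢
  rwa [IsUnit.neg_iff]

lemma tweak_exists {m : ℕ} (hm : 1 ≤ m) (c : A) (v : Fin (2 * m) → A)
    (hv : ∃ i, IsUnit (v i)) : ∃ i, IsUnit (tweak m c v i) := by
  refine ⟨firstUnit v hv, ?_⟩
  rw [tweak_apply_ne c v hv (fun h => partner_ne hm _ h.symm)]
  exact firstUnit_isUnit v hv

lemma tweak_firstUnit {m : ℕ} (hm : 1 ≤ m) (c : A) (v : Fin (2 * m) → A)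
    (hv : ∃ i, IsUnit (v i)) (hc : c ∈ nonunits A) (hw : ∃ i, IsUnit (tweak m c v i)) :
    firstUnit (tweak m c v) hw = firstUnit v hv := by
  set i₀ := firstUnit v hv with hi₀
  refine firstUnit_eq _ hw ?_ ?_
  · rw [tweak_apply_ne c v hv (fun h => partner_ne hm _ h.symm)]
    exact firstUnit_isUnit v hv
  · intro j hj
    by_cases hjp : j = partner m i₀
    · subst hjp
      rw [tweak_eq c v hv, Function.update_self]
      rw [← mem_nonunits_iff]
      have hA : v (partner m (firstUnit v hv)) ∈ nonunits A :=
        mem_nonunits_iff.mpr (firstUnit_min v hv hj)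
      have hB : Ring.inverse (star (v (firstUnit v hv))) *
          (if ((firstUnit v hv : ℕ)) < m then c else -c) ∈ nonunits A := by
        refine mul_nonunit (isUnit_ringInverse.mpr (firstUnit_isUnit v hv).star) ?_
        split_ifs
        · exact hc
        · exact neg_nonunit hc
      exact nonunits_add' hA hB
    · rw [tweak_apply_ne c v hv hjp]
      exact firstUnit_min v hv hj

lemma tweak_tweak {m : ℕ} (hm : 1 ≤ m) (c : A) (v : Fin (2 * m) → A)
    (hv : ∃ i, IsUnit (v i)) (hc : c ∈ nonunits A) :
    tweak m (-c) (tweak m c v) = v := by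
  have hw : ∃ i, IsUnit (tweak m c v i) := tweak_exists hm c v hv
  set i₀ := firstUnit v hv with hi₀
  set p := partner m i₀ with hp
  have hfw : firstUnit (tweak m c v) hw = i₀ := tweak_firstUnit hm c v hv hc hw
  have hne : i₀ ≠ p := fun h => partner_ne hm i₀ h.symm
  rw [tweak_eq (-c) (tweak m c v) hw, hfw]
  rw [tweak_apply_ne c v hv hne]
  have hpw : tweak m c v p = v p + Ring.inverse (star (v i₀)) *
      (if ((i₀ : ℕ)) < m then c else -c) := by
    rw [tweak_eq c v hv, Function.update_self, ← hi₀, ← hp]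
  rw [hpw]
  have : v p + Ring.inverse (star (v i₀)) * (if ((i₀ : ℕ)) < m then c else -c) +
      Ring.inverse (star (v i₀)) * (if ((i₀ : ℕ)) < m then -c else - -c) = v p := by
    split_ifs
    · rw [mul_neg, add_neg_cancel_right]
    · rw [neg_neg, mul_neg, neg_add_cancel_right]
  rw [this, tweak_eq c v hv, ← hi₀, ← hp, Function.update_idem, Function.update_eq_self]

lemma tweak_len {m : ℕ} (hm : 1 ≤ m) (c : A) (v : Fin (2 * m) → A)
    (hv : ∃ i, IsUnit (v i)) :
    lenA m (tweak m c v) = lenA m v + (c - star c) := by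
  set i₀ := firstUnit v hv with hi₀
  set e : A := if ((i₀ : ℕ)) < m then c else -c with he
  have hu : IsUnit (v i₀) := firstUnit_isUnit v hv
  rw [tweak_eq c v hv, ← hi₀, ← he, lenA_update hm]
  have h1 : star (v i₀) * (Ring.inverse (star (v i₀)) * e) = e := by
    rw [← mul_assoc, Ring.mul_inverse_cancel _ hu.star, one_mul]
  have h2 : star (Ring.inverse (star (v i₀)) * e) * v i₀ = star e := by
    rw [StarMul.star_mul, Ring.inverse_star, star_star, mul_assoc,
      Ring.inverse_mul_cancel _ hu, mul_one]
  rw [h1, h2]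
  congr 1
  rw [he]
  split_ifs
  · rfl
  · rw [star_neg, sub_neg_eq_add, neg_add_eq_sub]

end Tweak

section Main
variable [StarRing A] [IsLocalRing A]

lemma skew_nonunit (h2 : IsUnit (2 : A)) (hsk : ∀ a : A, a - star a ∈ nonunits A)
    {a : A} (ha : star a = -a) : a ∈ nonunits A := by
  have h : a + a ∈ nonunits A := by
    have := hsk a
    rwa [ha, sub_neg_eq_add] at this
  intro hu
  exact h (by rw [← two_mul]; exact h2.mul hu)

lemma card_fiber_eq {m : ℕ} (h2 : IsUnit (2 : A)) (hsk : ∀ a : A, a - star a ∈ nonunits A)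
    (hm : 1 ≤ m) (s t : A) (hs : star s = -s) (ht : star t = -t) :
    Nat.card {v : Fin (2 * m) → A // (∃ i, IsUnit (v i)) ∧ lenA m v = s} =
      Nat.card {v : Fin (2 * m) → A // (∃ i, IsUnit (v i)) ∧ lenA m v = t} := by
  obtain ⟨i2, hA, hB⟩ : ∃ i2 : A, i2 * 2 = 1 ∧ 2 * i2 = 1 := by
    refine ⟨↑h2.unit⁻¹, ?_, ?_⟩
    · have := Units.inv_mul h2.unit
      rwa [h2.unit_spec] at this
    · have := Units.mul_inv h2.unit
      rwa [h2.unit_spec] at this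
  have hi2unit : IsUnit i2 := ⟨⟨i2, 2, hA, hB⟩, rfl⟩
  have h2c : ∀ x : A, (2 : A) * x = x * 2 := fun x => by rw [two_mul, mul_two]
  have hcen : ∀ x : A, i2 * x = x * i2 := by
    intro x
    calc i2 * x = i2 * x * (2 * i2) := by rw [hB, mul_one]
      _ = i2 * (x * 2) * i2 := by
          rw [mul_assoc i2 x (2 * i2), ← mul_assoc x 2 i2, ← mul_assoc i2 (x * 2) i2]
      _ = i2 * (2 * x) * i2 := by rw [h2c]
      _ = i2 * 2 * (x * i2) := by
          rw [mul_assoc i2 (2 * x) i2, mul_assoc 2 x i2, ← mul_assoc i2 2 (x * i2)]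
      _ = x * i2 := by rw [hA, one_mul]
  have hstar2 : star (2 : A) = 2 := by
    rw [show (2 : A) = 1 + 1 from one_add_one_eq_two.symm, star_add, star_one]
  have hstar1 : star i2 * 2 = 1 := by
    have := congrArg star hB
    rwa [StarMul.star_mul, hstar2, star_one] at this
  have hstari2 : star i2 = i2 := by
    calc star i2 = star i2 * (2 * i2) := by rw [hB, mul_one]
      _ = star i2 * 2 * i2 := (mul_assoc _ _ _).symm
      _ = i2 := by rw [hstar1, one_mul]
  set c : A := i2 * (t - s) with hcdef
  have hts : star (t - s) = -(t - s) := by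
    rw [star_sub, hs, ht]
    abel
  have hstarc : star c = -c := by
    rw [hcdef, StarMul.star_mul, hstari2, hts, neg_mul, ← hcen]
  have hdiff : c - star c = t - s := by
    rw [hstarc, sub_neg_eq_add, ← two_mul, hcdef, ← mul_assoc, hB, one_mul]
  have hcnon : c ∈ nonunits A := by
    exact mul_nonunit hi2unit (skew_nonunit h2 hsk hts)
  refine Nat.card_congr ?_
  refine ⟨fun x => ⟨tweak m c x.1, tweak_exists hm c x.1 x.2.1, ?_⟩,
    fun y => ⟨tweak m (-c) y.1, tweak_exists hm (-c) y.1 y.2.1, ?_⟩,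
    fun x => Subtype.ext (tweak_tweak hm c x.1 x.2.1 hcnon),
    fun y => Subtype.ext ?_⟩
  · rw [tweak_len hm c x.1 x.2.1, x.2.2, hdiff]
    abel
  · rw [tweak_len hm (-c) y.1 y.2.1, y.2.2, star_neg, hstarc, neg_neg,
      show -c - c = -(c - star c) from by rw [hstarc]; abel, hdiff]
    abel
  · have := tweak_tweak hm (-c) y.1 y.2.1 (neg_nonunit hcnon)
    rwa [neg_neg] at this

end Main

end Stmt15Aux

open Stmt15Aux in
/-- Let `A` be a finite local ring with involution `*` such that `2` is a unit
and `a - a*` is a non-unit for every `a`; let `S = {a : a* = -a}` and `m ≥ 1`.  For every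
`s ∈ S`, the number of unimodular column vectors `v ∈ A^{2m}` of length `vᴴJ₀v = s` equals
`(|A|^{2m} - |r|^{2m}) / |S|` (stated multiplicatively, with `r = nonunits A` the Jacobson
radical); in particular this number does not depend on `s`. -/
theorem stmt15 {A : Type*} [Ring A] [StarRing A] [IsLocalRing A] [Finite A]
    (h2 : IsUnit (2 : A)) (hsk : ∀ a : A, a - star a ∈ nonunits A)
    {m : ℕ} (hm : 1 ≤ m)
    (s : A) (hs : star s = -s) :
    Nat.card {v : Fin (2 * m) → A //
        (∃ i, IsUnit (v i)) ∧ star v ⬝ᵥ (stdSymplectic A m).mulVec v = s} *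
      Nat.card {a : A // star a = -a} =
      Nat.card A ^ (2 * m) - Nat.card (nonunits A) ^ (2 * m) := by
  classical
  cases nonempty_fintype A
  have hlen : ∀ v : Fin (2 * m) → A,
      (star v ⬝ᵥ (stdSymplectic A m).mulVec v) = lenA m v := fun _ => rfl
  -- the type of unimodular vectors
  set S' := {a : A // star a = -a} with hS'
  set U := {v : Fin (2 * m) → A // ∃ i, IsUnit (v i)} with hU
  set f : U → S' := fun v => ⟨lenA m v.1, star_lenA hm v.1⟩ with hf
  -- fibers
  have hfiber : ∀ t : S', Nat.card {u : U // f u = t} =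
      Nat.card {v : Fin (2 * m) → A // (∃ i, IsUnit (v i)) ∧ lenA m v = t.1} := by
    intro t
    refine Nat.card_congr ?_
    refine (Equiv.subtypeEquivRight fun u => ?_).trans
      (Equiv.subtypeSubtypeEquivSubtypeInter (fun v : Fin (2 * m) → A => ∃ i, IsUnit (v i))
        (fun v => lenA m v = t.1))
    exact Subtype.ext_iff
  -- all fibers have the same cardinality
  have hsame : ∀ t : S', Nat.card {u : U // f u = t} =
      Nat.card {v : Fin (2 * m) → A // (∃ i, IsUnit (v i)) ∧ lenA m v = s} := by
    intro t
    rw [hfiber t]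
    exact card_fiber_eq h2 hsk hm t.1 s t.2 hs
  -- sum over fibers
  have hsum : Nat.card U = ∑ t : S', Nat.card {u : U // f u = t} := by
    rw [Nat.card_congr (Equiv.sigmaFiberEquiv f).symm, Nat.card_eq_fintype_card,
      Fintype.card_sigma]
    exact Finset.sum_congr rfl fun t _ => (Nat.card_eq_fintype_card).symm
  have hcount : Nat.card U =
      Nat.card {v : Fin (2 * m) → A // (∃ i, IsUnit (v i)) ∧ lenA m v = s} *
        Nat.card S' := by
    rw [hsum]
    rw [Finset.sum_congr rfl fun t _ => hsame t, Finset.sum_const, Finset.card_univ, smul_eq_mul,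
      mul_comm, Nat.card_eq_fintype_card (α := S')]
  -- total count of unimodular vectors
  have htotal : Nat.card U = Nat.card A ^ (2 * m) - Nat.card (nonunits A) ^ (2 * m) := by
    have e1 : U ≃ {v : Fin (2 * m) → A // ¬ ∀ i, ¬ IsUnit (v i)} :=
      Equiv.subtypeEquivRight fun v => by rw [not_forall_not]
    have e2 : {v : Fin (2 * m) → A // ∀ i, ¬ IsUnit (v i)} ≃ (Fin (2 * m) → nonunits A) := by
      refine (Equiv.subtypeEquivRight (p := fun v : Fin (2 * m) → A => ∀ i, ¬ IsUnit (v i))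
        (q := fun v => ∀ i, v i ∈ nonunits A) fun v => ?_).trans Equiv.subtypePiEquivPi
      exact forall_congr' fun i => (mem_nonunits_iff).symm
    rw [Nat.card_congr e1, Nat.card_eq_fintype_card, Fintype.card_subtype_compl,
      ← Nat.card_eq_fintype_card, ← Nat.card_eq_fintype_card, Nat.card_congr e2,
      Nat.card_fun, Nat.card_fun, Nat.card_eq_fintype_card (α := Fin (2 * m)),
      Fintype.card_fin]
  simp only [hlen]
  rw [← hcount, htotal]
end
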